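/- Let M be the module of formal sums ∑_{n∈ℤ} m_n A_n with m_n ∈ ℤ[v,v⁻¹] and support bounded below, and define T(A_n) = A_{n+1} if n is odd, and T(A_n) = A_{n−1} + (v − v⁻¹)A_n if n is even, extended by linearity and continuity. Then T satisfies the quadratic relation (T − v)(T + v⁻¹) = 0 on M. -/

import Mathlib

noncomputable section

/-- The abbreviation `v` for the variable of `ℤ[v,v⁻¹]`. -/
def v (n : ℤ) : LaurentPolynomial ℤ := LaurentPolynomial.T n

/-- The type A₁ periodic Hecke module operator `T` on formal sums `∑ mₙ Aₙ`
(encoded as coefficient functions `ℤ → ℤ[v,v⁻¹]`), determined by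
`T(Aₙ) = Aₙ₊₁` for `n` odd and `T(Aₙ) = Aₙ₋₁ + (v − v⁻¹)Aₙ` for `n` even,
extended by linearity and continuity: the coefficient of `Aₙ` in `T f` is
`f(n−1) + (v − v⁻¹) f(n)` if `n` is even, and `f(n+1)` if `n` is odd. -/
def Tact (f : ℤ → LaurentPolynomial ℤ) : ℤ → LaurentPolynomial ℤ := fun n =>
  if Even n then f (n - 1) + (v 1 - v (-1)) * f n else f (n + 1)

/-- On the module `M` of formal sums with support bounded below, the operator `T`
satisfies the quadratic relation `(T − v)(T + v⁻¹) = 0`, i.e.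
`T² + (v⁻¹ − v)T − 1 = 0`. -/
theorem Top_quadratic_relation (f : ℤ → LaurentPolynomial ℤ)
    (hf : BddBelow {n : ℤ | f n ≠ 0}) :
    Tact (Tact f) + (v (-1) - v 1) • Tact f = f := by
  funext n
  simp only [Pi.add_apply, Pi.smul_apply, smul_eq_mul, Tact]
  by_cases h : Even n
  · have h1 : ¬ Even (n - 1) := by simp [Int.even_iff] at *; omega
    simp only [if_pos h, if_neg h1]
    have : n - 1 + 1 = n := by ring
    rw [this]; ring
  · have h1 : Even (n + 1) := by rw [Int.even_iff] at h ⊢; omega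
    simp only [if_neg h, if_pos h1]
    have : n + 1 - 1 = n := by ring
    rw [this]; ring

end
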